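/- Closed-form solution of the bilinear liquid association maximization (Li 2004): Let M ∈ ℝ^{p×p} be a real symmetric matrix with p ≥ 2, and let λ_max and λ_min denote its largest and smallest eigenvalues, with corresponding orthonormal eigenvectors v₁ and v_p. Then the supremum of uᵀMv over all pairs of vectors u, v ∈ ℝ^p with ‖u‖₂ = ‖v‖₂ = 1 and ⟨u, v⟩ = 0 equals (λ_max − λ_min)/2, and it is attained at u = (v₁ + v_p)/√2, v = (v₁ − v_p)/√2. -/

import Mathlib

open Matrix

private lemma quad_form_le {p : ℕ} (M : Matrix (Fin p) (Fin p) ℝ) (hM : M.IsHermitian)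
    (c : ℝ) (h : ∀ (μ : ℝ) (w : Fin p → ℝ), w ≠ 0 → M.mulVec w = μ • w → μ ≤ c)
    (w : Fin p → ℝ) : w ⬝ᵥ M.mulVec w ≤ c * (w ⬝ᵥ w) := by
  set N : Matrix (Fin p) (Fin p) ℝ := c • 1 - M with hNdef
  have hN : N.IsHermitian := by
    unfold N
    unfold Matrix.IsHermitian
    rw [conjTranspose_sub, conjTranspose_smul, conjTranspose_one, hM.eq]
    simp
  have key : N.PosSemidef := by
    apply hN.posSemidef_iff_eigenvalues_nonneg.mpr
    intro i
    have hv := hN.mulVec_eigenvectorBasis i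
    set v : Fin p → ℝ := ⇑(hN.eigenvectorBasis i) with hvdef
    have hvne : v ≠ 0 := by
      intro h0
      exact hN.eigenvectorBasis.orthonormal.ne_zero i (by ext j; exact congrFun h0 j)
    have hNv : N.mulVec v = c • v - M.mulVec v := by
      rw [hNdef, sub_mulVec, smul_mulVec, one_mulVec]
    have hMv : M.mulVec v = (c - hN.eigenvalues i) • v := by
      rw [sub_smul, ← hv, hNv]
      abel
    have := h _ v hvne hMv
    rw [Pi.zero_apply]; linarith
  have h2 := key.dotProduct_mulVec_nonneg w
  have hNw : N.mulVec w = c • w - M.mulVec w := by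
    rw [hNdef, sub_mulVec, smul_mulVec, one_mulVec]
  rw [hNw] at h2
  simp only [star_trivial, dotProduct_sub, dotProduct_smul, smul_eq_mul] at h2
  linarith

private lemma quad_form_ge {p : ℕ} (M : Matrix (Fin p) (Fin p) ℝ) (hM : M.IsHermitian)
    (c : ℝ) (h : ∀ (μ : ℝ) (w : Fin p → ℝ), w ≠ 0 → M.mulVec w = μ • w → c ≤ μ)
    (w : Fin p → ℝ) : c * (w ⬝ᵥ w) ≤ w ⬝ᵥ M.mulVec w := by
  have hneg : (-M).IsHermitian := hM.neg
  have := quad_form_le (-M) hneg (-c) ?_ w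
  · rw [neg_mulVec, dotProduct_neg] at this
    linarith
  · intro μ v hvne hMv
    rw [neg_mulVec, neg_eq_iff_eq_neg, ← neg_smul] at hMv
    have := h _ v hvne hMv
    linarith

/-- Closed-form solution of the bilinear liquid association maximization (Li 2004): for a
real symmetric `p×p` matrix `M` (`p ≥ 2`) with largest/smallest eigenvalues `λmax`/`λmin`
and corresponding orthonormal eigenvectors `v₁`/`vp`, the supremum of `uᵀ M v` over unit
vectors `u ⊥ v` equals `(λmax − λmin)/2`, attained at `u = (v₁+vp)/√2`, `v = (v₁−vp)/√2`. -/
theorem bilinear_la_maximization {p : ℕ} (hp : 2 ≤ p)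
    (M : Matrix (Fin p) (Fin p) ℝ) (hM : Mᵀ = M)
    (lmax lmin : ℝ) (v₁ vp : Fin p → ℝ)
    (hv₁unit : v₁ ⬝ᵥ v₁ = 1) (hvpunit : vp ⬝ᵥ vp = 1) (horth : v₁ ⬝ᵥ vp = 0)
    (hv₁eig : M.mulVec v₁ = lmax • v₁) (hvpeig : M.mulVec vp = lmin • vp)
    (hextreme : ∀ (μ : ℝ) (w : Fin p → ℝ), w ≠ 0 → M.mulVec w = μ • w →
      lmin ≤ μ ∧ μ ≤ lmax) :
    IsGreatest {x : ℝ | ∃ u v : Fin p → ℝ,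
        u ⬝ᵥ u = 1 ∧ v ⬝ᵥ v = 1 ∧ u ⬝ᵥ v = 0 ∧ x = u ⬝ᵥ M.mulVec v}
      ((lmax - lmin) / 2) ∧
    (fun i => (v₁ i + vp i) / Real.sqrt 2) ⬝ᵥ
        M.mulVec (fun i => (v₁ i - vp i) / Real.sqrt 2) = (lmax - lmin) / 2 := by
  have hherm : M.IsHermitian := by
    unfold Matrix.IsHermitian
    rw [conjTranspose_eq_transpose_of_trivial, hM]
  have hvp1 : vp ⬝ᵥ v₁ = 0 := by rw [dotProduct_comm]; exact horth
  have hs2 : Real.sqrt 2 * Real.sqrt 2 = 2 := Real.mul_self_sqrt (by norm_num)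
  have hs2ne : Real.sqrt 2 ≠ 0 := by positivity
  -- the attained value
  have hval : (fun i => (v₁ i + vp i) / Real.sqrt 2) ⬝ᵥ
      M.mulVec (fun i => (v₁ i - vp i) / Real.sqrt 2) = (lmax - lmin) / 2 := by
    have hu : (fun i => (v₁ i + vp i) / Real.sqrt 2) = (Real.sqrt 2)⁻¹ • (v₁ + vp) := by
      funext i; simp [div_eq_inv_mul]
    have hv : (fun i => (v₁ i - vp i) / Real.sqrt 2) = (Real.sqrt 2)⁻¹ • (v₁ - vp) := by
      funext i; simp [div_eq_inv_mul]
    rw [hu, hv, mulVec_smul, mulVec_sub, hv₁eig, hvpeig]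
    simp only [smul_dotProduct, dotProduct_smul, dotProduct_sub, sub_dotProduct,
      add_dotProduct, dotProduct_add, smul_eq_mul, hv₁unit, hvpunit, horth, hvp1]
    field_simp
    rw [Real.sq_sqrt (by norm_num)]; ring
  refine ⟨⟨⟨fun i => (v₁ i + vp i) / Real.sqrt 2, fun i => (v₁ i - vp i) / Real.sqrt 2,
      ?_, ?_, ?_, hval.symm⟩, ?_⟩, hval⟩
  · have hu : (fun i => (v₁ i + vp i) / Real.sqrt 2) = (Real.sqrt 2)⁻¹ • (v₁ + vp) := by
      funext i; simp [div_eq_inv_mul]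
    rw [hu]
    simp only [smul_dotProduct, dotProduct_smul, dotProduct_add, add_dotProduct,
      smul_eq_mul, hv₁unit, hvpunit, horth, hvp1]
    field_simp
    rw [Real.sq_sqrt (by norm_num)]; ring
  · have hv : (fun i => (v₁ i - vp i) / Real.sqrt 2) = (Real.sqrt 2)⁻¹ • (v₁ - vp) := by
      funext i; simp [div_eq_inv_mul]
    rw [hv]
    simp only [smul_dotProduct, dotProduct_smul, dotProduct_sub, sub_dotProduct,
      smul_eq_mul, hv₁unit, hvpunit, horth, hvp1]
    field_simp
    rw [Real.sq_sqrt (by norm_num)]; ring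
  · have hu : (fun i => (v₁ i + vp i) / Real.sqrt 2) = (Real.sqrt 2)⁻¹ • (v₁ + vp) := by
      funext i; simp [div_eq_inv_mul]
    have hv : (fun i => (v₁ i - vp i) / Real.sqrt 2) = (Real.sqrt 2)⁻¹ • (v₁ - vp) := by
      funext i; simp [div_eq_inv_mul]
    rw [hu, hv]
    simp only [smul_dotProduct, dotProduct_smul, dotProduct_sub, sub_dotProduct,
      add_dotProduct, dotProduct_add, smul_eq_mul, hv₁unit, hvpunit, horth, hvp1]
    ring
  -- upper bound
  rintro x ⟨u, v, hu, hv, huv, rfl⟩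
  have hvu : v ⬝ᵥ u = 0 := by rw [dotProduct_comm]; exact huv
  have hsym : u ⬝ᵥ M.mulVec v = v ⬝ᵥ M.mulVec u := by
    rw [dotProduct_mulVec, ← mulVec_transpose, hM, dotProduct_comm]
  have hle := fun w => quad_form_le M hherm lmax (fun μ w h1 h2 => (hextreme μ w h1 h2).2) w
  have hge := fun w => quad_form_ge M hherm lmin (fun μ w h1 h2 => (hextreme μ w h1 h2).1) w
  have h1 := hle (u + v)
  have h2 := hge (u - v)
  have e1 : (u + v) ⬝ᵥ (u + v) = 2 := by
    simp only [dotProduct_add, add_dotProduct, hu, hv, huv, hvu]; ring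
  have e2 : (u - v) ⬝ᵥ (u - v) = 2 := by
    simp only [dotProduct_sub, sub_dotProduct, hu, hv, huv, hvu]; ring
  have e3 : (u + v) ⬝ᵥ M.mulVec (u + v) =
      u ⬝ᵥ M.mulVec u + v ⬝ᵥ M.mulVec u + (u ⬝ᵥ M.mulVec v + v ⬝ᵥ M.mulVec v) := by
    simp only [mulVec_add, dotProduct_add, add_dotProduct]
  have e4 : (u - v) ⬝ᵥ M.mulVec (u - v) =
      u ⬝ᵥ M.mulVec u - v ⬝ᵥ M.mulVec u - (u ⬝ᵥ M.mulVec v - v ⬝ᵥ M.mulVec v) := by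
    simp only [mulVec_sub, dotProduct_sub, sub_dotProduct]
  rw [e1, e3] at h1
  rw [e2, e4] at h2
  rw [hsym] at h1 h2 ⊢
  linarith
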